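/- Let m be an even natural number. Then for every j with 0 ≤ j ≤ 2m+2, the coefficient a_j of P_{m,m+2} = (X−1)^m(X+1)^{m+2} is nonzero and its sign equals (−1)^{m/2 + ⌊|j−(m+1)|/2⌋}. Equivalently, the sign pattern of P_{m,m+2}, read from the leading coefficient, consists of m/2 pairs of equal signs, then a triple of equal signs in the middle, then m/2 pairs of equal signs, consecutive blocks having opposite signs (the pattern Σ_{2,…,2,3,2,…,2}). -/

import Mathlib

open Polynomial

lemma key (m j : ℕ) : ((X^2 - 1 : ℝ[X])^m).coeff j =
    if 2 ∣ j then (-1:ℝ)^(m - j/2) * m.choose (j/2) else 0 := by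
  have h : (X^2 - 1 : ℝ[X]) = X^2 + C (-1) := by
    simp [sub_eq_add_neg]
  rw [h, add_pow, finset_sum_coeff]
  have hterm : ∀ i ∈ Finset.range (m+1),
      (((X:ℝ[X])^2)^i * C (-1) ^ (m - i) * (m.choose i : ℝ[X])).coeff j
      = if i = j/2 then (if 2 ∣ j then (-1:ℝ)^(m-i) * m.choose i else 0) else 0 := by
    intro i hi
    rw [← pow_mul, ← C_pow, ← C_eq_natCast, mul_assoc, ← C_mul, mul_comm, coeff_C_mul,
      coeff_X_pow]
    split_ifs with h1 h2 h3 h4 h5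
    all_goals try (exfalso; omega)
    all_goals ring
  rw [Finset.sum_congr rfl hterm, Finset.sum_ite_eq' (Finset.range (m+1))]
  split_ifs with h1 h2 h3
  · rfl
  · rfl
  · have : m < j/2 := by simpa using h1
    simp [Nat.choose_eq_zero_of_lt this]
  · rfl

lemma choose_strict (m i : ℕ) (h1 : 1 ≤ i) (h2 : 2*i ≤ m) :
    m.choose (i-1) < m.choose i := by
  have h3 := Nat.choose_succ_right_eq m (i-1)
  have h4 : i - 1 + 1 = i := by omega
  rw [h4] at h3
  have h5 : 0 < m.choose (i-1) := Nat.choose_pos (by omega)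
  have h6 : i + 1 ≤ m - (i-1) := by omega
  have h7 : m.choose (i-1) * i < m.choose i * i := by nlinarith
  exact Nat.lt_of_mul_lt_mul_right h7

lemma choose_strict' (m i : ℕ) (hme : m % 2 = 0) (hk : m/2 < i) (hi : i ≤ m) :
    m.choose i < m.choose (i-1) := by
  have h := choose_strict m (m - i + 1) (by omega) (by omega)
  have e1 : m - i + 1 - 1 = m - i := by omega
  have e2 : m - i + 1 = m - (i-1) := by omega
  rw [e1, e2, Nat.choose_symm hi, Nat.choose_symm (by omega : i - 1 ≤ m)] at h
  exact h

lemma neg_one_pow_congr_mod {a b : ℕ} (h : a % 2 = b % 2) : (-1:ℝ)^a = (-1:ℝ)^b := by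
  rcases Nat.even_or_odd a with ha | ha
  · have hb : Even b := by rw [Nat.even_iff] at *; omega
    rw [ha.neg_one_pow, hb.neg_one_pow]
  · have hb : Odd b := by rw [Nat.odd_iff] at *; omega
    rw [ha.neg_one_pow, hb.neg_one_pow]

lemma sign_aux (e : ℕ) {c : ℝ} (hc : 0 < c) :
    Real.sign ((-1:ℝ)^e * c) = (-1:ℝ)^e := by
  rcases Nat.even_or_odd e with h | h
  · rw [h.neg_one_pow, one_mul, Real.sign_of_pos hc]
  · rw [h.neg_one_pow, neg_one_mul, Real.sign_of_neg (by linarith)]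

theorem sign_pattern_P_m_m_add_two_even (m : ℕ) (hm : Even m) (j : ℕ) (hj : j ≤ 2 * m + 2) :
    ((X - 1) ^ m * (X + 1) ^ (m + 2) : ℝ[X]).coeff j ≠ 0 ∧
    Real.sign (((X - 1) ^ m * (X + 1) ^ (m + 2) : ℝ[X]).coeff j) =
      (-1 : ℝ) ^ (m / 2 + ((j : ℤ) - ((m : ℤ) + 1)).natAbs / 2) := by
  obtain ⟨k, hk⟩ := hm
  have hP : ((X - 1) ^ m * (X + 1) ^ (m + 2) : ℝ[X])
      = (X^2-1)^m * X^2 + C 2 * ((X^2-1)^m * X^1) + (X^2-1)^m := by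
    have h1 : ((X:ℝ[X])^2 - 1) = (X-1)*(X+1) := by ring
    rw [h1, mul_pow, pow_add, map_ofNat C 2]
    ring
  rw [hP]
  simp only [coeff_add, coeff_C_mul, coeff_mul_X_pow', key]
  obtain ⟨e, c, hval, hc, hpar⟩ :
      ∃ (e : ℕ) (c : ℝ),
        ((if 2 ≤ j then (if 2 ∣ (j-2) then (-1:ℝ)^(m - (j-2)/2) * m.choose ((j-2)/2) else 0) else 0)
          + 2 * (if 1 ≤ j then (if 2 ∣ (j-1) then (-1:ℝ)^(m - (j-1)/2) * m.choose ((j-1)/2) else 0) else 0)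
          + (if 2 ∣ j then (-1:ℝ)^(m - j/2) * m.choose (j/2) else 0))
          = (-1:ℝ)^e * c ∧ 0 < c ∧
          e % 2 = (m / 2 + ((j : ℤ) - ((m : ℤ) + 1)).natAbs / 2) % 2 := by
    rcases Nat.even_or_odd j with hje | hjo
    · obtain ⟨i, hij⟩ := hje
      rcases Nat.eq_zero_or_pos i with hi0 | hi1
      · -- j = 0
        refine ⟨m, 1, ?_, one_pos, by omega⟩
        have e2 : j / 2 = 0 := by omega
        rw [if_neg (by omega), if_neg (by omega), if_pos (by omega : 2 ∣ j), e2]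
        simp
      · rcases le_or_gt i k with hik | hik
        · -- 1 ≤ i ≤ k
          refine ⟨m - i, (m.choose i : ℝ) - m.choose (i-1), ?_, ?_, by omega⟩
          · have e1 : (j-2)/2 = i - 1 := by omega
            have e2 : j/2 = i := by omega
            have e3 : m - (i-1) = (m-i)+1 := by omega
            rw [if_pos (by omega : 2 ≤ j), if_pos (by omega : 2 ∣ (j-2)),
              if_neg (by omega : ¬ (2 ∣ (j-1))), ite_self, if_pos (by omega : 2 ∣ j),
              e1, e2, e3, pow_succ]
            ring
          · have := choose_strict m i (by omega) (by omega)
            have : (m.choose (i-1) : ℝ) < m.choose i := by exact_mod_cast this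
            linarith
        · rcases le_or_gt i m with him | him
          · -- k < i ≤ m
            refine ⟨m - i + 1, (m.choose (i-1) : ℝ) - m.choose i, ?_, ?_, by omega⟩
            · have e1 : (j-2)/2 = i - 1 := by omega
              have e2 : j/2 = i := by omega
              have e3 : m - (i-1) = (m-i)+1 := by omega
              rw [if_pos (by omega : 2 ≤ j), if_pos (by omega : 2 ∣ (j-2)),
                if_neg (by omega : ¬ (2 ∣ (j-1))), ite_self, if_pos (by omega : 2 ∣ j),
                e1, e2, e3, pow_succ]
              ring
            · have := choose_strict' m i (by omega) (by omega) him
              have : (m.choose i : ℝ) < m.choose (i-1) := by exact_mod_cast this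
              linarith
          · -- i = m + 1
            have hi : i = m + 1 := by omega
            refine ⟨0, 1, ?_, one_pos, by omega⟩
            have e1 : (j-2)/2 = m := by omega
            have e2 : j/2 = m + 1 := by omega
            rw [if_pos (by omega : 2 ≤ j), if_pos (by omega : 2 ∣ (j-2)),
              if_neg (by omega : ¬ (2 ∣ (j-1))), ite_self, if_pos (by omega : 2 ∣ j),
              e1, e2]
            simp [Nat.choose_succ_self]
    · -- j odd
      obtain ⟨i, hij⟩ := hjo
      refine ⟨m - i, 2 * m.choose i, ?_, ?_, by omega⟩
      · have e2 : (j-1)/2 = i := by omega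
        rw [if_pos (by omega : 1 ≤ j), if_pos (by omega : 2 ∣ (j-1)),
          if_neg (by omega : ¬ (2 ∣ j)), e2]
        rcases le_or_gt 2 j with h2 | h2
        · rw [if_pos h2, if_neg (by omega : ¬ (2 ∣ (j-2)))]
          ring
        · rw [if_neg (by omega : ¬ 2 ≤ j)]
          ring
      · have : 0 < m.choose i := Nat.choose_pos (by omega)
        positivity
  rw [hval]
  refine ⟨?_, ?_⟩
  · exact mul_ne_zero (pow_ne_zero _ (by norm_num)) (ne_of_gt hc)
  · rw [sign_aux e hc]
    exact neg_one_pow_congr_mod hpar
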